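/- Let α, d > 0, c ∈ ℝ, p ∈ ℝ and A > 0. There exists ρ₀ ≥ 1 such that for every ρ ≥ ρ₀ and every family of complex coefficients (c_{q,k,m,n}), indexed by integers q ≥ 3 and k, m, n ≥ 0 with k+m+n ≤ q, satisfying |c_{q,k,m,n}| ≤ A·ρ^{−q}, there exist K > 0 and δ₀ > 0 such that for all 0 < δ < δ₀ and all integers l with |l| ≥ 2: the series Υ^{[l]} := δ^{p} · Σ_{q ≥ 3} Σ_{k+m+n ≤ q} δ^{q} · c_{q,k,m,n} · I_{n, k+m+n+2/d}^{l, c/d} converges absolutely, and |Υ^{[l]}| ≤ K · δ^{p − 2/d} · e^{−(3|l|/4)·(απ)/(2dδ)}. (This is the bound on the Fourier coefficients Υ₀^{[l]}, |l| ≥ 2, of the Melnikov function in Theorem 2.3, stated for a general family of Taylor coefficients with analyticity bounds.) -/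

import Mathlib

/-- I_{n,Q}^{l,C} = ∫ e^{−iα|l|s/δ} sinh(ds)^n / cosh(ds)^{Q+1+iC|l|} ds. -/
noncomputable def Iint (α d δ C : ℝ) (l : ℤ) (n : ℕ) (Q : ℝ) : ℂ :=
  ∫ s : ℝ,
    Complex.exp (-(Complex.I * (α : ℂ) * ((|l| : ℤ) : ℂ) * (s : ℂ)) / (δ : ℂ))
      * ((Real.sinh (d * s) : ℝ) : ℂ) ^ n
      / ((Real.cosh (d * s) : ℂ) ^ (((Q : ℂ) + 1) + Complex.I * (C : ℂ) * ((|l| : ℤ) : ℂ)))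

/-- The general term δ^q · c_{q,k,m,n} · I_{n,k+m+n+2/d}^{l,c/d} of the Melnikov series,
extended by zero outside the index range q ≥ 3, k+m+n ≤ q. -/
noncomputable def melTerm (α d δ c : ℝ) (l : ℤ) (a : ℕ → ℕ → ℕ → ℕ → ℂ)
    (x : ℕ × ℕ × ℕ × ℕ) : ℂ :=
  if 3 ≤ x.1 ∧ x.2.1 + x.2.2.1 + x.2.2.2 ≤ x.1 then
    (δ : ℂ) ^ x.1 * a x.1 x.2.1 x.2.2.1 x.2.2.2
      * Iint α d δ (c / d) l x.2.2.2 (((x.2.1 + x.2.2.1 + x.2.2.2 : ℕ) : ℝ) + 2 / d)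
  else 0

open Complex MeasureTheory Real Filter intervalIntegral Set Topology

lemma cosh_add_mul_I' (x y : ℝ) :
    Complex.cosh ((x : ℂ) + (y : ℂ) * Complex.I)
      = ((Real.cosh x * Real.cos y : ℝ) : ℂ) + ((Real.sinh x * Real.sin y : ℝ) : ℂ) * Complex.I := by
  rw [Complex.cosh_add, Complex.cosh_mul_I, Complex.sinh_mul_I, ← Complex.ofReal_cosh,
    ← Complex.ofReal_sinh, ← Complex.ofReal_cos, ← Complex.ofReal_sin]
  push_cast
  ring

lemma sinh_add_mul_I' (x y : ℝ) :
    Complex.sinh ((x : ℂ) + (y : ℂ) * Complex.I)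
      = ((Real.sinh x * Real.cos y : ℝ) : ℂ) + ((Real.cosh x * Real.sin y : ℝ) : ℂ) * Complex.I := by
  rw [Complex.sinh_add, Complex.cosh_mul_I, Complex.sinh_mul_I, ← Complex.ofReal_cosh,
    ← Complex.ofReal_sinh, ← Complex.ofReal_cos, ← Complex.ofReal_sin]
  push_cast
  ring

lemma cosh_re' (x y : ℝ) :
    (Complex.cosh ((x : ℂ) + (y : ℂ) * Complex.I)).re = Real.cosh x * Real.cos y := by
  rw [cosh_add_mul_I']
  simp only [Complex.add_re, Complex.ofReal_re, Complex.mul_re, Complex.I_re, Complex.I_im,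
    Complex.ofReal_im]
  ring

lemma abs_sinh_le (x y : ℝ) :
    ‖Complex.sinh ((x : ℂ) + (y : ℂ) * Complex.I)‖ ≤ Real.cosh x := by
  rw [sinh_add_mul_I' x y]
  have h := Complex.sq_norm (((Real.sinh x * Real.cos y : ℝ) : ℂ)
      + ((Real.cosh x * Real.sin y : ℝ) : ℂ) * Complex.I)
  have h2 : Complex.normSq (((Real.sinh x * Real.cos y : ℝ) : ℂ)
      + ((Real.cosh x * Real.sin y : ℝ) : ℂ) * Complex.I)
      = (Real.sinh x * Real.cos y)^2 + (Real.cosh x * Real.sin y)^2 := by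
    simp only [Complex.normSq_apply, Complex.add_re, Complex.ofReal_re, Complex.mul_re,
      Complex.I_re, Complex.I_im, Complex.ofReal_im, Complex.add_im, Complex.mul_im]
    ring
  have hs : Real.sin y ^ 2 + Real.cos y ^ 2 = 1 := Real.sin_sq_add_cos_sq y
  have hc : Real.sinh x ^ 2 = Real.cosh x ^ 2 - 1 := Real.sinh_sq x
  have hcc : 0 < Real.cosh x := Real.cosh_pos x
  rw [h2] at h
  nlinarith [norm_nonneg (((Real.sinh x * Real.cos y : ℝ) : ℂ)
      + ((Real.cosh x * Real.sin y : ℝ) : ℂ) * Complex.I), Real.sin_sq_le_one y]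

lemma exp_half_le_cosh (x : ℝ) : Real.exp |x| / 2 ≤ Real.cosh x := by
  rw [Real.cosh_eq]
  have := Real.exp_abs_le x
  linarith

lemma integrable_exp_neg_abs {b : ℝ} (hb : 0 < b) :
    Integrable fun x : ℝ => Real.exp (-(b * |x|)) := by
  apply Integrable.mono' (integrable_inv_one_add_sq.const_mul (4 / b ^ 2 + 1))
  · exact Continuous.aestronglyMeasurable (by fun_prop)
  · filter_upwards with x
    rw [Real.norm_eq_abs, abs_of_pos (Real.exp_pos _)]
    have hx : 0 ≤ |x| := abs_nonneg x
    have hxx : |x|^2 = x^2 := sq_abs x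
    have h0 : (0:ℝ) < 1 + x^2 := by positivity
    have h0' : (0:ℝ) < Real.exp (b*|x|) := Real.exp_pos _
    have hb2 : (0:ℝ) < b^2 := by positivity
    have h1 : b * |x| / 2 + 1 ≤ Real.exp (b * |x| / 2) := Real.add_one_le_exp _
    have h3 : (b*|x|/2 + 1)^2 ≤ Real.exp (b*|x|) := by
      have := pow_le_pow_left₀ (by positivity) h1 2
      calc (b*|x|/2+1)^2 ≤ Real.exp (b*|x|/2)^2 := this
        _ = Real.exp (b*|x|) := by rw [sq, ← Real.exp_add]; ring_nf
    have hsq : (4/b^2) * (b*|x|/2)^2 = x^2 := by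
      rw [← hxx]; field_simp; ring_nf
    have key : 1 + x^2 ≤ (4/b^2+1) * Real.exp (b*|x|) := by
      have ht : (0:ℝ) ≤ b*|x|/2 := by positivity
      have hd4 : (0:ℝ) ≤ 4/b^2 := by positivity
      nlinarith [h3, hsq, sq_nonneg (b*|x|/2), mul_le_mul_of_nonneg_left h3 hd4]
    rw [Real.exp_neg, inv_eq_one_div, ← div_eq_mul_inv, div_le_div_iff₀ h0' h0]
    linarith [key]


/-- the analytic continuation of the integrand -/
noncomputable def stripF (β d : ℝ) (n : ℕ) (w : ℂ) (z : ℂ) : ℂ :=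
  Complex.exp (-(Complex.I * (β : ℂ) * z)) * (Complex.sinh ((d : ℂ) * z)) ^ n
    / (Complex.cosh ((d : ℂ) * z)) ^ w

lemma mul_decomp (d : ℝ) (z : ℂ) :
    (d : ℂ) * z = ((d * z.re : ℝ) : ℂ) + ((d * z.im : ℝ) : ℂ) * Complex.I := by
  apply Complex.ext <;>
    simp [Complex.mul_re, Complex.mul_im]

section strip

variable {β d σ r : ℝ} {w : ℂ} {n : ℕ}

lemma strip_cos_pos (hd : 0 < d) (hσ' : d * σ < π / 2) {y : ℝ} (hy : |y| ≤ σ) :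
    0 < Real.cos (d * y) := by
  have h1 : |d * y| ≤ d * σ := by
    rw [abs_mul, abs_of_pos hd]
    exact mul_le_mul_of_nonneg_left hy hd.le
  rw [← Real.cos_abs]
  apply Real.cos_pos_of_mem_Ioo
  constructor
  · nlinarith [abs_nonneg (d * y), Real.pi_pos]
  · linarith

lemma strip_cosh_re_pos (hd : 0 < d) (hσ' : d * σ < π / 2) {z : ℂ} (hz : |z.im| ≤ σ) :
    0 < (Complex.cosh ((d : ℂ) * z)).re := by
  rw [mul_decomp, cosh_re']
  exact mul_pos (Real.cosh_pos _) (strip_cos_pos hd hσ' hz)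

lemma strip_cosh_mem (hd : 0 < d) (hσ' : d * σ < π / 2) {z : ℂ} (hz : |z.im| ≤ σ) :
    Complex.cosh ((d : ℂ) * z) ∈ Complex.slitPlane :=
  Or.inl (strip_cosh_re_pos hd hσ' hz)

lemma strip_cosh_ne_zero (hd : 0 < d) (hσ' : d * σ < π / 2) {z : ℂ} (hz : |z.im| ≤ σ) :
    Complex.cosh ((d : ℂ) * z) ≠ 0 := by
  intro h
  have := strip_cosh_re_pos hd hσ' (σ := σ) hz
  rw [h] at this
  simp at this

lemma strip_diff (hd : 0 < d) (hσ' : d * σ < π / 2) {z : ℂ} (hz : |z.im| ≤ σ) :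
    DifferentiableAt ℂ (stripF β d n w) z := by
  have h1 : DifferentiableAt ℂ (fun z : ℂ => Complex.exp (-(Complex.I * (β : ℂ) * z))) z := by
    apply DifferentiableAt.cexp
    fun_prop
  have h2 : DifferentiableAt ℂ (fun z : ℂ => (Complex.sinh ((d : ℂ) * z)) ^ n) z := by
    apply DifferentiableAt.pow
    exact Complex.differentiable_sinh.differentiableAt.comp z (by fun_prop)
  have h3 : DifferentiableAt ℂ (fun z : ℂ => (Complex.cosh ((d : ℂ) * z)) ^ w) z := by
    apply DifferentiableAt.cpow
    · exact Complex.differentiable_cosh.differentiableAt.comp z (by fun_prop)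
    · exact differentiableAt_const w
    · exact strip_cosh_mem hd hσ' hz
  exact (h1.mul h2).div h3
    (fun h => (strip_cosh_ne_zero hd hσ' hz) ((Complex.cpow_eq_zero_iff _ _).mp h).1)

lemma strip_norm_bound (hd : 0 < d) (hσ' : d * σ < π / 2) (hβ : 0 ≤ β)
    (hw0 : 0 ≤ w.re) (hr : 0 < r) (hnr : (n : ℝ) + r ≤ w.re)
    {z : ℂ} (hz1 : -σ ≤ z.im) (hz2 : z.im ≤ 0) :
    ‖stripF β d n w z‖ ≤ Real.exp (β * z.im)
      * (Real.cos (d * σ) ^ (-(w.re)) * Real.exp (π / 2 * |w.im|))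
      * Real.cosh (d * z.re) ^ (-r) := by
  have hσ0 : 0 ≤ σ := by linarith
  have habs : |z.im| ≤ σ := abs_le.mpr ⟨hz1, by linarith⟩
  set c₀ := Real.cos (d * σ) with hc₀
  have hc₀pos : 0 < c₀ := strip_cos_pos hd hσ' (by rw [_root_.abs_of_nonneg hσ0])
  set ch := Real.cosh (d * z.re) with hch
  have hchpos : 0 < ch := Real.cosh_pos _
  have hch1 : 1 ≤ ch := Real.one_le_cosh _
  set cz := Complex.cosh ((d : ℂ) * z) with hcz
  set E := Real.exp (π / 2 * |w.im|) with hE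
  have hEpos : 0 < E := Real.exp_pos _
  have h_abs_exp : ‖Complex.exp (-(Complex.I * (β : ℂ) * z))‖ = Real.exp (β * z.im) := by
    rw [Complex.norm_exp]
    congr 1
    simp [Complex.mul_re, Complex.mul_im]
  have h_sinh : ‖Complex.sinh ((d : ℂ) * z)‖ ≤ ch := by
    rw [mul_decomp]; exact abs_sinh_le _ _
  have hczre : cz.re = ch * Real.cos (d * z.im) := by
    rw [hcz, mul_decomp, cosh_re']
  have h_cos_le : c₀ ≤ Real.cos (d * z.im) := by
    rw [← Real.cos_abs (d * z.im)]
    apply Real.cos_le_cos_of_nonneg_of_le_pi (abs_nonneg _)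
    · nlinarith [Real.pi_pos]
    · rw [abs_mul, abs_of_pos hd]
      exact mul_le_mul_of_nonneg_left habs hd.le
  have h_cz_lower : c₀ * ch ≤ ‖cz‖ := by
    calc c₀ * ch ≤ Real.cos (d * z.im) * ch := by
          exact mul_le_mul_of_nonneg_right h_cos_le hchpos.le
      _ = cz.re := by rw [hczre]; ring
      _ ≤ ‖cz‖ := Complex.re_le_norm _
  have hczre_pos : 0 < cz.re := strip_cosh_re_pos hd hσ' habs
  have hczne : cz ≠ 0 := strip_cosh_ne_zero hd hσ' habs
  have h_cpow : ‖cz ^ w‖ = ‖cz‖ ^ w.re / Real.exp (cz.arg * w.im) :=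
    Complex.norm_cpow_of_ne_zero hczne w
  have h_exparg : Real.exp (cz.arg * w.im) ≤ E := by
    apply Real.exp_le_exp.mpr
    calc cz.arg * w.im ≤ |cz.arg * w.im| := le_abs_self _
      _ = |cz.arg| * |w.im| := abs_mul _ _
      _ ≤ π / 2 * |w.im| := by
          apply mul_le_mul_of_nonneg_right ?_ (abs_nonneg _)
          exact Complex.abs_arg_le_pi_div_two_iff.mpr hczre_pos.le
  have h_cpow_lower : (c₀ * ch) ^ w.re / E ≤ ‖cz ^ w‖ := by
    rw [h_cpow]
    apply div_le_div₀ (Real.rpow_nonneg (norm_nonneg _) _)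
      (Real.rpow_le_rpow (by positivity) h_cz_lower hw0) (Real.exp_pos _) h_exparg
  have hEq : (Real.exp (β * z.im) * ch ^ n) / ((c₀ * ch) ^ w.re / E)
      = Real.exp (β * z.im) * (c₀ ^ (-(w.re)) * E) * ch ^ ((n : ℝ) - w.re) := by
    rw [Real.mul_rpow hc₀pos.le hchpos.le, Real.rpow_sub hchpos, Real.rpow_natCast,
      Real.rpow_neg hc₀pos.le]
    field_simp
  have hFle : ‖stripF β d n w z‖
      ≤ (Real.exp (β * z.im) * ch ^ n) / ((c₀ * ch) ^ w.re / E) := by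
    rw [stripF, norm_div, norm_mul, norm_pow]
    apply div_le_div₀ (by positivity) ?_ (by positivity) h_cpow_lower
    rw [h_abs_exp]
    exact mul_le_mul_of_nonneg_left (pow_le_pow_left₀ (norm_nonneg _) h_sinh n)
      (Real.exp_pos _).le
  calc ‖stripF β d n w z‖ ≤ (Real.exp (β * z.im) * ch ^ n) / ((c₀ * ch) ^ w.re / E) := hFle
    _ = Real.exp (β * z.im) * (c₀ ^ (-(w.re)) * E) * ch ^ ((n : ℝ) - w.re) := hEq
    _ ≤ Real.exp (β * z.im) * (c₀ ^ (-(w.re)) * E) * ch ^ (-r) := by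
        apply mul_le_mul_of_nonneg_left
          (Real.rpow_le_rpow_of_exponent_le hch1 (by linarith)) (by positivity)

lemma integrable_cosh_rpow (hd : 0 < d) (hr : 0 < r) :
    Integrable (fun x : ℝ => Real.cosh (d * x) ^ (-r)) := by
  apply Integrable.mono' ((integrable_exp_neg_abs (mul_pos hr hd)).const_mul (2 ^ r))
  · apply Continuous.aestronglyMeasurable
    apply Continuous.rpow_const (by fun_prop)
    intro x
    exact Or.inl (Real.cosh_pos _).ne'
  · filter_upwards with x
    rw [Real.norm_eq_abs, _root_.abs_of_nonneg (Real.rpow_nonneg (Real.cosh_pos _).le _)]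
    have h1 : Real.exp (d * |x|) / 2 ≤ Real.cosh (d * x) := by
      have := exp_half_le_cosh (d * x)
      rwa [abs_mul, _root_.abs_of_pos hd] at this
    have h2 : Real.cosh (d * x) ^ (-r) ≤ (Real.exp (d * |x|) / 2) ^ (-r) := by
      rw [Real.rpow_neg (Real.cosh_pos _).le, Real.rpow_neg (by positivity)]
      exact inv_anti₀ (Real.rpow_pos_of_pos (by positivity) _)
        (Real.rpow_le_rpow (by positivity) h1 hr.le)
    have h3 : (Real.exp (d * |x|) / 2) ^ (-r) = 2 ^ r * Real.exp (-(r * d * |x|)) := by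
      rw [Real.rpow_neg (by positivity), Real.div_rpow (Real.exp_pos _).le (by norm_num),
        ← Real.exp_mul, inv_div, div_eq_mul_inv, ← Real.exp_neg]
      ring_nf
    calc Real.cosh (d * x) ^ (-r) ≤ (Real.exp (d * |x|) / 2) ^ (-r) := h2
      _ = 2 ^ r * Real.exp (-(r * d * |x|)) := h3

lemma strip_line_bound (hd : 0 < d) (hσ' : d * σ < π / 2) (hβ : 0 ≤ β)
    (hw0 : 0 ≤ w.re) (hr : 0 < r) (hnr : (n : ℝ) + r ≤ w.re)
    {y₀ : ℝ} (hy₀ : -σ ≤ y₀) (hy₀' : y₀ ≤ 0) (x : ℝ) :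
    ‖stripF β d n w ((x : ℂ) + (y₀ : ℂ) * Complex.I)‖ ≤ Real.exp (β * y₀)
      * (Real.cos (d * σ) ^ (-(w.re)) * Real.exp (π / 2 * |w.im|))
      * Real.cosh (d * x) ^ (-r) := by
  have him : ((x : ℂ) + (y₀ : ℂ) * Complex.I).im = y₀ := by simp
  have hre : ((x : ℂ) + (y₀ : ℂ) * Complex.I).re = x := by simp
  have := strip_norm_bound (σ := σ) hd hσ' hβ hw0 hr hnr
    (z := (x : ℂ) + (y₀ : ℂ) * Complex.I) (by rw [him]; exact hy₀) (by rw [him]; exact hy₀')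
  rwa [him, hre] at this

lemma strip_line_integrable (hd : 0 < d) (hσ' : d * σ < π / 2) (hβ : 0 ≤ β)
    (hw0 : 0 ≤ w.re) (hr : 0 < r) (hnr : (n : ℝ) + r ≤ w.re)
    {y₀ : ℝ} (hy₀ : -σ ≤ y₀) (hy₀' : y₀ ≤ 0) :
    Integrable (fun x : ℝ => stripF β d n w ((x : ℂ) + (y₀ : ℂ) * Complex.I)) := by
  have hσ0 : 0 ≤ σ := by linarith
  have hc₀ : 0 < Real.cos (d * σ) := strip_cos_pos hd hσ' (by rw [_root_.abs_of_nonneg hσ0])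
  set M := Real.cos (d * σ) ^ (-(w.re)) * Real.exp (π / 2 * |w.im|) with hM
  have hM0 : 0 ≤ M := mul_nonneg (Real.rpow_nonneg hc₀.le _) (Real.exp_pos _).le
  apply Integrable.mono' ((integrable_cosh_rpow hd hr).const_mul M)
  · apply Continuous.aestronglyMeasurable
    rw [continuous_iff_continuousAt]
    intro x
    have hdiff : DifferentiableAt ℂ (stripF β d n w) ((x : ℂ) + (y₀ : ℂ) * Complex.I) := by
      apply strip_diff hd hσ'
      simp only [Complex.add_im, Complex.ofReal_im, Complex.mul_im, Complex.I_im, Complex.I_re,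
        Complex.ofReal_re, zero_add, mul_one, mul_zero, add_zero]
      exact abs_le.mpr ⟨hy₀, by linarith⟩
    show ContinuousAt ((stripF β d n w) ∘ (fun x : ℝ => (x : ℂ) + (y₀ : ℂ) * Complex.I)) x
    exact ContinuousAt.comp hdiff.continuousAt (by fun_prop)
  · filter_upwards with x
    calc ‖stripF β d n w ((x : ℂ) + (y₀ : ℂ) * Complex.I)‖
        ≤ Real.exp (β * y₀) * M * Real.cosh (d * x) ^ (-r) :=
          strip_line_bound hd hσ' hβ hw0 hr hnr hy₀ hy₀' x
      _ ≤ 1 * M * Real.cosh (d * x) ^ (-r) := by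
          apply mul_le_mul_of_nonneg_right ?_ (Real.rpow_nonneg (Real.cosh_pos _).le _)
          apply mul_le_mul_of_nonneg_right ?_ hM0
          exact Real.exp_le_one_iff.mpr (mul_nonpos_of_nonneg_of_nonpos hβ hy₀')
      _ = M * Real.cosh (d * x) ^ (-r) := by ring

lemma contour_shift (hd : 0 < d) (hσ0 : 0 ≤ σ) (hσ' : d * σ < π / 2) (hβ : 0 ≤ β)
    (hw0 : 0 ≤ w.re) (hr : 0 < r) (hnr : (n : ℝ) + r ≤ w.re) :
    ∫ x : ℝ, stripF β d n w (x : ℂ)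
      = ∫ x : ℝ, stripF β d n w ((x : ℂ) + ((-σ : ℝ) : ℂ) * Complex.I) := by
  set F := stripF β d n w with hF
  have hc₀ : 0 < Real.cos (d * σ) := strip_cos_pos hd hσ' (by rw [_root_.abs_of_nonneg hσ0])
  set M := Real.cos (d * σ) ^ (-(w.re)) * Real.exp (π / 2 * |w.im|) with hM
  have hM0 : 0 ≤ M := mul_nonneg (Real.rpow_nonneg hc₀.le _) (Real.exp_pos _).le
  set V : ℝ → ℂ := fun T => ∫ y in (-σ)..(0:ℝ), F ((T : ℂ) + (y : ℂ) * Complex.I) with hV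
  have key : ∀ T : ℝ, (∫ x in (-T)..T, F ((x : ℂ)))
      = (∫ x in (-T)..T, F ((x : ℂ) + ((-σ : ℝ) : ℂ) * Complex.I))
        + Complex.I • V T - Complex.I • V (-T) := by
    intro T
    have hdiff : DifferentiableOn ℂ F
        ((Set.uIcc (((-T : ℝ) : ℂ) + ((-σ : ℝ) : ℂ) * Complex.I).re ((T : ℝ) : ℂ).re)
          ×ℂ (Set.uIcc (((-T : ℝ) : ℂ) + ((-σ : ℝ) : ℂ) * Complex.I).im ((T : ℝ) : ℂ).im)) := by
      intro z hz
      rw [Complex.mem_reProdIm] at hz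
      have him : z.im ∈ Set.uIcc (-σ) (0 : ℝ) := by simpa using hz.2
      rw [Set.uIcc_of_le (by linarith : -σ ≤ (0 : ℝ))] at him
      exact (strip_diff hd hσ'
        (abs_le.mpr ⟨him.1, him.2.trans (by linarith)⟩)).differentiableWithinAt
    have h0 := Complex.integral_boundary_rect_eq_zero_of_differentiableOn F
      (((-T : ℝ) : ℂ) + ((-σ : ℝ) : ℂ) * Complex.I) ((T : ℝ) : ℂ) hdiff
    simp only [Complex.add_re, Complex.ofReal_re, Complex.mul_re, Complex.I_re, Complex.I_im,
      Complex.ofReal_im, Complex.add_im, Complex.mul_im, mul_zero, mul_one, zero_mul, sub_zero,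
      zero_add, add_zero, zero_sub, neg_neg, Complex.ofReal_neg, Complex.ofReal_zero,
      Complex.neg_re, Complex.neg_im, neg_zero, smul_eq_mul, hV] at h0 ⊢
    linear_combination -h0
  -- vertical integrals vanish
  have vbound : ∀ T : ℝ, ‖V T‖ ≤ M * Real.cosh (d * T) ^ (-r) * σ := by
    intro T
    have hb : ∀ y ∈ Set.uIoc (-σ) (0 : ℝ),
        ‖F ((T : ℂ) + (y : ℂ) * Complex.I)‖ ≤ M * Real.cosh (d * T) ^ (-r) := by
      intro y hy
      rw [Set.uIoc_of_le (by linarith : -σ ≤ (0 : ℝ))] at hy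
      calc ‖F ((T : ℂ) + (y : ℂ) * Complex.I)‖
          ≤ Real.exp (β * y) * M * Real.cosh (d * T) ^ (-r) :=
            strip_line_bound hd hσ' hβ hw0 hr hnr hy.1.le hy.2 T
        _ ≤ 1 * M * Real.cosh (d * T) ^ (-r) := by
            apply mul_le_mul_of_nonneg_right ?_ (Real.rpow_nonneg (Real.cosh_pos _).le _)
            exact mul_le_mul_of_nonneg_right
              (Real.exp_le_one_iff.mpr (mul_nonpos_of_nonneg_of_nonpos hβ hy.2)) hM0
        _ = M * Real.cosh (d * T) ^ (-r) := by ring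
    have hthis := intervalIntegral.norm_integral_le_of_norm_le_const hb
    have habs0 : |(0 : ℝ) - (-σ)| = σ := by
      rw [sub_neg_eq_add, zero_add, _root_.abs_of_nonneg hσ0]
    rwa [habs0] at hthis
  have hcoshTop : Tendsto (fun T : ℝ => Real.cosh (d * T)) atTop atTop := by
    have hexp : Tendsto (fun T : ℝ => Real.exp (d * T) / 2) atTop atTop := by
      apply Tendsto.atTop_div_const two_pos
      exact Real.tendsto_exp_atTop.comp (Tendsto.const_mul_atTop hd tendsto_id)
    apply tendsto_atTop_mono (fun T => ?_) hexp
    calc Real.exp (d * T) / 2 ≤ Real.exp |d * T| / 2 := by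
          gcongr
          exact le_abs_self _
      _ ≤ Real.cosh (d * T) := exp_half_le_cosh _
  have hzero : Tendsto (fun T => M * Real.cosh (d * T) ^ (-r) * σ) atTop (𝓝 0) := by
    have h1 := ((tendsto_rpow_neg_atTop hr).comp hcoshTop).const_mul M |>.mul_const σ
    simpa using h1
  have hVtend : Tendsto V atTop (𝓝 0) := by
    rw [tendsto_zero_iff_norm_tendsto_zero]
    exact tendsto_of_tendsto_of_tendsto_of_le_of_le' tendsto_const_nhds hzero
      (Eventually.of_forall fun T => norm_nonneg _) (Eventually.of_forall vbound)
  have hVtend' : Tendsto (fun T => V (-T)) atTop (𝓝 0) := by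
    rw [tendsto_zero_iff_norm_tendsto_zero]
    refine tendsto_of_tendsto_of_tendsto_of_le_of_le' tendsto_const_nhds hzero
      (Eventually.of_forall fun T => norm_nonneg _) (Eventually.of_forall fun T => ?_)
    have := vbound (-T)
    rwa [mul_neg, Real.cosh_neg] at this
  have hintσ : Integrable (fun x : ℝ => F ((x : ℂ) + ((-σ : ℝ) : ℂ) * Complex.I)) :=
    strip_line_integrable hd hσ' hβ hw0 hr hnr le_rfl (neg_nonpos.mpr hσ0)
  have hint0 : Integrable (fun x : ℝ => F ((x : ℂ))) := by
    have h := strip_line_integrable (σ := σ) (β := β) (w := w) (n := n)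
      hd hσ' hβ hw0 hr hnr (y₀ := 0) (by linarith) le_rfl
    simpa using h
  have h1 : Tendsto (fun T : ℝ => ∫ x in (-T)..T, F ((x : ℂ))) atTop
      (𝓝 (∫ x : ℝ, F ((x : ℂ)))) :=
    intervalIntegral_tendsto_integral hint0 tendsto_neg_atTop_atBot tendsto_id
  have h2 : Tendsto (fun T : ℝ => (∫ x in (-T)..T, F ((x : ℂ) + ((-σ : ℝ) : ℂ) * Complex.I))
        + Complex.I • V T - Complex.I • V (-T)) atTop
      (𝓝 ((∫ x : ℝ, F ((x : ℂ) + ((-σ : ℝ) : ℂ) * Complex.I)) + Complex.I • 0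
        - Complex.I • 0)) := by
    exact ((intervalIntegral_tendsto_integral hintσ tendsto_neg_atTop_atBot tendsto_id).add
      (hVtend.const_smul Complex.I)).sub (hVtend'.const_smul Complex.I)
  have h1' : Tendsto (fun T : ℝ => ∫ x in (-T)..T, F ((x : ℂ))) atTop
      (𝓝 ((∫ x : ℝ, F ((x : ℂ) + ((-σ : ℝ) : ℂ) * Complex.I)) + Complex.I • 0
        - Complex.I • 0)) := by
    refine h2.congr fun T => (key T).symm
  have := tendsto_nhds_unique h1 h1'
  simpa using this

end strip

lemma Iint_bound (α d δ C : ℝ) (l : ℤ) (n : ℕ) (Q : ℝ) (hα : 0 ≤ α) (hd : 0 < d) (hδ : 0 < δ)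
    (hQ0 : 0 ≤ Q + 1) (hQ : (n : ℝ) + (1 + 2 / d) ≤ Q + 1) :
    ‖Iint α d δ C l n Q‖
      ≤ Real.cos (7 * π / 16) ^ (-(Q + 1)) * Real.exp (π / 2 * (|C| * ((|l| : ℤ) : ℝ)))
          * (∫ x : ℝ, Real.cosh (d * x) ^ (-(1 + 2 / d)))
          * Real.exp (-(7 * π * α * ((|l| : ℤ) : ℝ)) / (16 * d * δ)) := by
  set L : ℝ := ((|l| : ℤ) : ℝ) with hLdef
  have hL : 0 ≤ L := by positivity
  set β : ℝ := α * L / δ with hβdef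
  have hβ : 0 ≤ β := by positivity
  set σ : ℝ := 7 * π / (16 * d) with hσdef
  have hσ0 : 0 ≤ σ := by positivity
  have hdσ : d * σ = 7 * π / 16 := by rw [hσdef]; field_simp
  have hσ' : d * σ < π / 2 := by rw [hdσ]; nlinarith [Real.pi_pos]
  set r : ℝ := 1 + 2 / d with hrdef
  have hr : 0 < r := by positivity
  set w : ℂ := ((Q : ℂ) + 1) + Complex.I * (C : ℂ) * ((|l| : ℤ) : ℂ) with hwdef
  have hwre : w.re = Q + 1 := by
    rw [hwdef]
    simp [Complex.add_re, Complex.mul_re, Complex.mul_im]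
  have hwim : w.im = C * L := by
    rw [hwdef, hLdef]
    simp [Complex.add_im, Complex.mul_im, Complex.mul_re]
  have hw0 : 0 ≤ w.re := by rw [hwre]; exact hQ0
  have hnr : (n : ℝ) + r ≤ w.re := by rw [hwre, hrdef]; exact hQ
  have hIeq : Iint α d δ C l n Q = ∫ x : ℝ, stripF β d n w (x : ℂ) := by
    rw [Iint]
    congr 1
    funext s
    rw [stripF]
    congr 2
    · congr 1
      have hLc : ((L : ℝ) : ℂ) = ((|l| : ℤ) : ℂ) := by rw [hLdef]; exact Complex.ofReal_intCast _
      have hβc : ((β : ℝ) : ℂ) = (α : ℂ) * ((|l| : ℤ) : ℂ) / (δ : ℂ) := by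
        rw [hβdef, Complex.ofReal_div, Complex.ofReal_mul, hLc]
      rw [hβc]
      ring
    · rw [← Complex.ofReal_mul, Complex.ofReal_sinh]
    · rw [← Complex.ofReal_mul, Complex.ofReal_cosh]
  rw [hIeq, contour_shift hd hσ0 hσ' hβ hw0 hr hnr]
  set M : ℝ := Real.cos (d * σ) ^ (-(w.re)) * Real.exp (π / 2 * |w.im|) with hMdef
  have hc₀ : 0 < Real.cos (d * σ) := strip_cos_pos hd hσ' (by rw [_root_.abs_of_nonneg hσ0])
  have hM0 : 0 ≤ M := mul_nonneg (Real.rpow_nonneg hc₀.le _) (Real.exp_pos _).le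
  have hbound : ‖∫ x : ℝ, stripF β d n w ((x : ℂ) + ((-σ : ℝ) : ℂ) * Complex.I)‖
      ≤ ∫ x : ℝ, Real.exp (β * (-σ)) * M * Real.cosh (d * x) ^ (-r) := by
    apply MeasureTheory.norm_integral_le_of_norm_le
      ((integrable_cosh_rpow hd hr).const_mul (Real.exp (β * (-σ)) * M))
    filter_upwards with x
    exact strip_line_bound hd hσ' hβ hw0 hr hnr le_rfl (neg_nonpos.mpr hσ0) x
  have hInt : (∫ x : ℝ, Real.exp (β * (-σ)) * M * Real.cosh (d * x) ^ (-r))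
      = Real.exp (β * (-σ)) * M * ∫ x : ℝ, Real.cosh (d * x) ^ (-r) := by
    rw [MeasureTheory.integral_const_mul]
  refine hbound.trans ?_
  rw [hInt]
  have hexp : Real.exp (β * (-σ)) = Real.exp (-(7 * π * α * L) / (16 * d * δ)) := by
    congr 1
    rw [hβdef, hσdef]
    field_simp
  have habsim : |w.im| ≤ |C| * L := by
    rw [hwim, abs_mul, _root_.abs_of_nonneg hL]
  have hMle : M ≤ Real.cos (7 * π / 16) ^ (-(Q + 1)) * Real.exp (π / 2 * (|C| * L)) := by
    rw [hMdef, hdσ, hwre]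
    apply mul_le_mul_of_nonneg_left ?_ (Real.rpow_nonneg (by rw [← hdσ]; exact hc₀.le) _)
    exact Real.exp_le_exp.mpr (mul_le_mul_of_nonneg_left habsim (by positivity))
  have hJ0 : 0 ≤ ∫ x : ℝ, Real.cosh (d * x) ^ (-r) :=
    MeasureTheory.integral_nonneg fun x => Real.rpow_nonneg (Real.cosh_pos _).le _
  calc Real.exp (β * (-σ)) * M * ∫ x : ℝ, Real.cosh (d * x) ^ (-r)
      ≤ Real.exp (β * (-σ))
          * (Real.cos (7 * π / 16) ^ (-(Q + 1)) * Real.exp (π / 2 * (|C| * L)))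
          * ∫ x : ℝ, Real.cosh (d * x) ^ (-r) := by
        exact mul_le_mul_of_nonneg_right
          (mul_le_mul_of_nonneg_left hMle (Real.exp_pos _).le) hJ0
    _ = Real.cos (7 * π / 16) ^ (-(Q + 1)) * Real.exp (π / 2 * (|C| * L))
          * (∫ x : ℝ, Real.cosh (d * x) ^ (-r))
          * Real.exp (-(7 * π * α * L) / (16 * d * δ)) := by
        rw [← hexp]; ring

noncomputable def ugeo (i : ℕ) : ℝ := (2 : ℝ)⁻¹ ^ i

lemma ugeo_nonneg (i : ℕ) : 0 ≤ ugeo i := by unfold ugeo; positivity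

lemma ugeo_summable : Summable ugeo :=
  summable_geometric_of_lt_one (by norm_num) (by norm_num)

lemma ugeo_tsum : ∑' i, ugeo i = 2 := by
  unfold ugeo
  rw [tsum_geometric_of_lt_one (by norm_num) (by norm_num)]
  norm_num

lemma ugeo_anti {i q : ℕ} (h : i ≤ q) : ugeo q ≤ ugeo i :=
  pow_le_pow_of_le_one (by norm_num) (by norm_num) h

lemma ugeo_sixteen (q : ℕ) : ((16 : ℝ)⁻¹) ^ q = ugeo q * (ugeo q * (ugeo q * ugeo q)) := by
  unfold ugeo
  rw [← mul_pow, ← mul_pow, ← mul_pow]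
  norm_num

set_option maxHeartbeats 2000000 in
theorem stmt12 (α d c p A : ℝ) (hα : 0 < α) (hd : 0 < d) (hA : 0 < A) :
    ∃ ρ₀ : ℝ, 1 ≤ ρ₀ ∧
      ∀ ρ : ℝ, ρ₀ ≤ ρ →
      ∀ a : ℕ → ℕ → ℕ → ℕ → ℂ,
        (∀ q k m n : ℕ, 3 ≤ q → k + m + n ≤ q → ‖a q k m n‖ ≤ A * (ρ ^ q)⁻¹) →
        ∃ K > (0 : ℝ), ∃ δ₀ > (0 : ℝ), ∀ δ : ℝ, 0 < δ → δ < δ₀ →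
          ∀ l : ℤ, 2 ≤ |l| →
            Summable (fun x : ℕ × ℕ × ℕ × ℕ => ‖melTerm α d δ c l a x‖) ∧
            ‖((δ ^ p : ℝ) : ℂ) * ∑' x : ℕ × ℕ × ℕ × ℕ, melTerm α d δ c l a x‖
              ≤ K * δ ^ (p - 2 / d)
                  * Real.exp (-((3 * ((|l| : ℤ) : ℝ) / 4) * (α * Real.pi) / (2 * d * δ))) := by
  have hπ := Real.pi_pos
  set cos₀ : ℝ := Real.cos (7 * π / 16) with hcos₀def
  have hcos₀ : 0 < cos₀ := by
    apply Real.cos_pos_of_mem_Ioo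
    constructor <;> nlinarith
  have hcos₀le : cos₀ ≤ 1 := Real.cos_le_one _
  set J : ℝ := ∫ x : ℝ, Real.cosh (d * x) ^ (-(1 + 2 / d)) with hJdef
  have hJ0 : 0 ≤ J :=
    MeasureTheory.integral_nonneg fun x => Real.rpow_nonneg (Real.cosh_pos _).le _
  set B : ℝ := cos₀ ^ (-(2 / d + 1)) * J with hBdef
  have hB0 : 0 ≤ B := mul_nonneg (Real.rpow_nonneg hcos₀.le _) hJ0
  refine ⟨max 1 (16 / cos₀), le_max_left _ _, fun ρ hρ a ha => ?_⟩
  have hρ1 : 1 ≤ ρ := le_trans (le_max_left _ _) hρ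
  have hρc : 16 / cos₀ ≤ ρ := le_trans (le_max_right _ _) hρ
  have hρ0 : 0 < ρ := lt_of_lt_of_le one_pos hρ1
  refine ⟨16 * A * B + 1, by nlinarith [mul_nonneg hA.le hB0], min 1 (α / (8 * (|c| + 1))),
    by positivity,
    fun δ hδ hδ' l hl => ?_⟩
  have hδ1 : δ < 1 := lt_of_lt_of_le hδ' (min_le_left _ _)
  have hδc : δ ≤ α / (8 * (|c| + 1)) := le_of_lt (lt_of_lt_of_le hδ' (min_le_right _ _))
  have h8 : 8 * (δ * |c|) ≤ α := by
    have h1 : δ * (8 * (|c| + 1)) ≤ α := by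
      rw [← le_div_iff₀ (by positivity)]
      exact hδc
    nlinarith [abs_nonneg c, hδ.le]
  set L : ℝ := ((|l| : ℤ) : ℝ) with hLdef
  have hL2 : (2 : ℝ) ≤ L := by rw [hLdef]; exact_mod_cast hl
  have hL0 : (0 : ℝ) ≤ L := by linarith
  set E : ℝ := Real.exp (-(3 * L / 4 * (α * π) / (2 * d * δ))) with hEdef
  have hE0 : 0 < E := Real.exp_pos _
  -- key exponential comparison
  have hexpkey : Real.exp (π / 2 * (|c / d| * L)) * Real.exp (-(7 * π * α * L) / (16 * d * δ))
      ≤ E := by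
    rw [← Real.exp_add, hEdef]
    apply Real.exp_le_exp.mpr
    have hcd : |c / d| = |c| / d := by rw [abs_div, _root_.abs_of_pos hd]
    rw [hcd]
    have hdiff : -(3 * L / 4 * (α * π) / (2 * d * δ))
        - (π / 2 * (|c| / d * L) + -(7 * π * α * L) / (16 * d * δ))
        = π * L * (α - 8 * (δ * |c|)) / (16 * d * δ) := by
      field_simp
      ring
    have hnn : 0 ≤ π * L * (α - 8 * (δ * |c|)) / (16 * d * δ) := by
      apply div_nonneg ?_ (by positivity)
      exact mul_nonneg (mul_nonneg hπ.le hL0) (by linarith)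
    linarith
  -- the comparison sequence
  have hu0 : ∀ i, 0 ≤ ugeo i := ugeo_nonneg
  set g : ℕ × ℕ × ℕ × ℕ → ℝ :=
    fun x => (A * B * E) * (ugeo x.1 * (ugeo x.2.1 * (ugeo x.2.2.1 * ugeo x.2.2.2))) with hgdef
  -- per-term bound
  have hbound : ∀ x : ℕ × ℕ × ℕ × ℕ, ‖melTerm α d δ c l a x‖ ≤ g x := by
    rintro ⟨q, k, m, n⟩
    by_cases hcond : 3 ≤ q ∧ k + m + n ≤ q
    · set Q : ℝ := ((k + m + n : ℕ) : ℝ) + 2 / d with hQdef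
      have hIb := Iint_bound α d δ (c / d) l n Q hα.le hd hδ (by rw [hQdef]; positivity)
        (by rw [hQdef]; push_cast; linarith [Nat.cast_nonneg (α := ℝ) k,
          Nat.cast_nonneg (α := ℝ) m])
      have hnorm : ‖melTerm α d δ c l a (q, k, m, n)‖
          = δ ^ q * ‖a q k m n‖ * ‖Iint α d δ (c / d) l n Q‖ := by
        simp only [melTerm]
        rw [if_pos hcond, ← hQdef]
        rw [norm_mul, norm_mul, norm_pow, Complex.norm_real, Real.norm_eq_abs,
          _root_.abs_of_pos hδ]
      have hQsplit : cos₀ ^ (-(Q + 1)) = cos₀ ^ (-((k + m + n : ℕ) : ℝ))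
          * cos₀ ^ (-(2 / d + 1)) := by
        rw [← Real.rpow_add hcos₀]
        congr 1
        rw [hQdef]
        ring
      have hpow1 : cos₀ ^ (-((k + m + n : ℕ) : ℝ)) ≤ cos₀ ^ (-((q : ℕ) : ℝ)) := by
        apply Real.rpow_le_rpow_of_exponent_ge hcos₀ hcos₀le
        have : ((k + m + n : ℕ) : ℝ) ≤ (q : ℝ) := by exact_mod_cast hcond.2
        linarith
      have hgeo : δ ^ q * (ρ ^ q)⁻¹ * cos₀ ^ (-((q : ℕ) : ℝ)) ≤ ((16 : ℝ)⁻¹) ^ q := by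
        rw [Real.rpow_neg hcos₀.le, Real.rpow_natCast]
        have heq : δ ^ q * (ρ ^ q)⁻¹ * (cos₀ ^ q)⁻¹ = (δ * (ρ * cos₀)⁻¹) ^ q := by
          rw [mul_pow, mul_inv, mul_pow]
          ring
        rw [heq]
        apply pow_le_pow_left₀ (by positivity) ?_ q
        have h16 : 16 ≤ ρ * cos₀ := by
          rw [div_le_iff₀ hcos₀] at hρc
          linarith
        have hinv : (ρ * cos₀)⁻¹ ≤ 16⁻¹ := by
          apply inv_anti₀ (by norm_num) h16
        calc δ * (ρ * cos₀)⁻¹ ≤ 1 * (16 : ℝ)⁻¹ := by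
              apply mul_le_mul hδ1.le hinv (by positivity) (by norm_num)
          _ = (16 : ℝ)⁻¹ := by norm_num
      have h16split : ((16 : ℝ)⁻¹) ^ q ≤ ugeo q * (ugeo k * (ugeo m * ugeo n)) := by
        rw [ugeo_sixteen q]
        have h1 : ugeo q ≤ ugeo k := ugeo_anti (by omega)
        have h2 : ugeo q ≤ ugeo m := ugeo_anti (by omega)
        have h3 : ugeo q ≤ ugeo n := ugeo_anti (by omega)
        have hin : ugeo q * ugeo q ≤ ugeo m * ugeo n :=
          mul_le_mul h2 h3 (hu0 q) (hu0 m)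
        have hmid : ugeo q * (ugeo q * ugeo q) ≤ ugeo k * (ugeo m * ugeo n) :=
          mul_le_mul h1 hin (mul_nonneg (hu0 q) (hu0 q)) (hu0 k)
        exact mul_le_mul_of_nonneg_left hmid (hu0 q)
      calc ‖melTerm α d δ c l a (q, k, m, n)‖
          = δ ^ q * ‖a q k m n‖ * ‖Iint α d δ (c / d) l n Q‖ := hnorm
        _ ≤ δ ^ q * (A * (ρ ^ q)⁻¹)
            * (cos₀ ^ (-(Q + 1)) * Real.exp (π / 2 * (|c / d| * L)) * J
                * Real.exp (-(7 * π * α * L) / (16 * d * δ))) := by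
            apply mul_le_mul ?_ hIb (norm_nonneg _) ?_
            · exact mul_le_mul_of_nonneg_left (ha q k m n hcond.1 hcond.2) (by positivity)
            · positivity
        _ = (δ ^ q * (ρ ^ q)⁻¹ * cos₀ ^ (-((k + m + n : ℕ) : ℝ)))
            * (A * (cos₀ ^ (-(2 / d + 1)) * J))
            * (Real.exp (π / 2 * (|c / d| * L))
                * Real.exp (-(7 * π * α * L) / (16 * d * δ))) := by
            rw [hQsplit]
            ring
        _ ≤ (δ ^ q * (ρ ^ q)⁻¹ * cos₀ ^ (-((q : ℕ) : ℝ))) * (A * B) * E := by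
            rw [hBdef]
            apply mul_le_mul ?_ hexpkey (by positivity) ?_
            · apply mul_le_mul_of_nonneg_right
                (mul_le_mul_of_nonneg_left hpow1 (by positivity))
                (mul_nonneg hA.le (mul_nonneg (Real.rpow_nonneg hcos₀.le _) hJ0))
            · exact mul_nonneg (mul_nonneg (by positivity) (Real.rpow_nonneg hcos₀.le _))
                (mul_nonneg hA.le (mul_nonneg (Real.rpow_nonneg hcos₀.le _) hJ0))
        _ ≤ ((16 : ℝ)⁻¹) ^ q * (A * B) * E := by
            apply mul_le_mul_of_nonneg_right
              (mul_le_mul_of_nonneg_right hgeo (mul_nonneg hA.le hB0)) hE0.le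
        _ ≤ (ugeo q * (ugeo k * (ugeo m * ugeo n))) * (A * B) * E := by
            apply mul_le_mul_of_nonneg_right
              (mul_le_mul_of_nonneg_right h16split (mul_nonneg hA.le hB0)) hE0.le
        _ = g (q, k, m, n) := by rw [hgdef]; ring
    · simp only [melTerm]
      rw [if_neg hcond]
      simp only [norm_zero]
      rw [hgdef]
      have := mul_nonneg (mul_nonneg (mul_nonneg hA.le hB0) hE0.le)
        (mul_nonneg (hu0 q) (mul_nonneg (hu0 k) (mul_nonneg (hu0 m) (hu0 n))))
      exact this
  -- summability
  have s1 : Summable ugeo := ugeo_summable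
  have s2 : Summable (fun y : ℕ × ℕ => ugeo y.1 * ugeo y.2) :=
    s1.mul_of_nonneg s1 hu0 hu0
  have s3 : Summable (fun y : ℕ × ℕ × ℕ => ugeo y.1 * (ugeo y.2.1 * ugeo y.2.2)) :=
    s1.mul_of_nonneg s2 hu0 fun y => mul_nonneg (hu0 _) (hu0 _)
  have s4 : Summable
      (fun x : ℕ × ℕ × ℕ × ℕ => ugeo x.1 * (ugeo x.2.1 * (ugeo x.2.2.1 * ugeo x.2.2.2))) :=
    s1.mul_of_nonneg s3 hu0 fun y => mul_nonneg (hu0 _) (mul_nonneg (hu0 _) (hu0 _))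
  have sg : Summable g := by
    rw [hgdef]
    exact s4.mul_left _
  have hsummable : Summable (fun x : ℕ × ℕ × ℕ × ℕ => ‖melTerm α d δ c l a x‖) :=
    Summable.of_nonneg_of_le (fun x => norm_nonneg _) hbound sg
  refine ⟨hsummable, ?_⟩
  -- tsum of g
  have t1 : ∑' i : ℕ, ugeo i = 2 := ugeo_tsum
  have t2 : ∑' y : ℕ × ℕ, ugeo y.1 * ugeo y.2 = 4 := by
    rw [← Summable.tsum_mul_tsum s1 s1 s2, t1]; norm_num
  have t3 : ∑' y : ℕ × ℕ × ℕ, ugeo y.1 * (ugeo y.2.1 * ugeo y.2.2) = 8 := by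
    rw [← Summable.tsum_mul_tsum s1 s2 s3, t1, t2]; norm_num
  have t4 : ∑' x : ℕ × ℕ × ℕ × ℕ,
      ugeo x.1 * (ugeo x.2.1 * (ugeo x.2.2.1 * ugeo x.2.2.2)) = 16 := by
    rw [← Summable.tsum_mul_tsum s1 s3 s4, t1, t3]; norm_num
  have tg : ∑' x, g x = (A * B * E) * 16 := by
    rw [hgdef, tsum_mul_left, t4]
  -- final estimate
  have hnorm_tsum : ‖∑' x : ℕ × ℕ × ℕ × ℕ, melTerm α d δ c l a x‖ ≤ (A * B * E) * 16 := by
    refine le_trans (norm_tsum_le_tsum_norm hsummable) ?_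
    rw [← tg]
    exact Summable.tsum_le_tsum hbound hsummable sg
  have hδp : ‖((δ ^ p : ℝ) : ℂ)‖ = δ ^ p := by
    rw [Complex.norm_real, Real.norm_eq_abs, _root_.abs_of_pos (Real.rpow_pos_of_pos hδ p)]
  rw [norm_mul, hδp]
  have hδsplit : δ ^ p ≤ δ ^ (p - 2 / d) := by
    have : δ ^ p = δ ^ (p - 2 / d) * δ ^ (2 / d) := by
      rw [← Real.rpow_add hδ]; ring_nf
    rw [this]
    calc δ ^ (p - 2 / d) * δ ^ (2 / d) ≤ δ ^ (p - 2 / d) * 1 := by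
          apply mul_le_mul_of_nonneg_left
            (Real.rpow_le_one hδ.le hδ1.le (by positivity))
            (Real.rpow_pos_of_pos hδ _).le
      _ = δ ^ (p - 2 / d) := by ring
  calc δ ^ p * ‖∑' x : ℕ × ℕ × ℕ × ℕ, melTerm α d δ c l a x‖
      ≤ δ ^ (p - 2 / d) * ((A * B * E) * 16) := by
        apply mul_le_mul hδsplit hnorm_tsum (norm_nonneg _)
          (Real.rpow_pos_of_pos hδ _).le
    _ ≤ (16 * A * B + 1) * δ ^ (p - 2 / d) * E := by
        have hpos : 0 < δ ^ (p - 2 / d) := Real.rpow_pos_of_pos hδ _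
        nlinarith [mul_nonneg (mul_nonneg hA.le hB0) hE0.le, hpos.le,
          mul_nonneg hpos.le hE0.le]
    _ = (16 * A * B + 1) * δ ^ (p - 2 / d)
        * Real.exp (-(3 * ((|l| : ℤ) : ℝ) / 4 * (α * π) / (2 * d * δ))) := by
        rw [hEdef, hLdef]
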